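/- For the p-NCG proposal q_α on a discrete log-quadratic distribution over a finite set X of at least two distinct points, there exist constants c₁, c₂, Z > 0 depending only on the distribution such that the mixing time satisfies t_mix(ε) ≥ ((c₁/Z)·exp(c₂/(2α)) − 1)·log(1/(2ε)) for all ε ∈ (0, 1/2) and all α > 0. In particular, the mixing time grows exponentially as α → 0⁺. -/

import Mathlib

open Matrix Real Polynomial

noncomputable section

/-- `‖v‖_p^p = ∑ i |v i|^p`. -/
def pNormPow {d : ℕ} (p : ℝ) (v : Fin d → ℝ) : ℝ := ∑ i, |v i| ^ p

lemma multiset_exists_card_mul_le (s : Multiset ℝ) (hs : s ≠ 0) :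
    ∃ x ∈ s, s.sum ≤ (Multiset.card s : ℝ) * x := by
  induction s using Multiset.induction_on with
  | empty => exact absurd rfl hs
  | cons a t ih =>
    rcases eq_or_ne t 0 with rfl | ht
    · exact ⟨a, Multiset.mem_cons_self a 0, by simp⟩
    · obtain ⟨x, hx, hsum⟩ := ih ht
      have hct : (0:ℝ) ≤ (Multiset.card t : ℝ) := Nat.cast_nonneg _
      rcases le_total a x with h | h
      · refine ⟨x, Multiset.mem_cons_of_mem hx, ?_⟩
        simp only [Multiset.sum_cons, Multiset.card_cons]
        push_cast
        nlinarith
      · refine ⟨a, Multiset.mem_cons_self a t, ?_⟩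
        simp only [Multiset.sum_cons, Multiset.card_cons]
        push_cast
        nlinarith [mul_le_mul_of_nonneg_left h hct]

lemma charpoly_eval_eq {n : Type*} [Fintype n] [DecidableEq n] (N : Matrix n n ℂ) (μ : ℂ) :
    (Matrix.charpoly N).eval μ = (μ • (1 : Matrix n n ℂ) - N).det := by
  rw [Matrix.charpoly, ← Polynomial.coe_evalRingHom, RingHom.map_det]
  congr 1
  ext i j
  by_cases h : i = j
  · subst h
    simp [Matrix.charmatrix_apply_eq, Matrix.one_apply]
  · simp [Matrix.charmatrix_apply_ne _ _ _ h, Matrix.one_apply, h]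

lemma exists_eigenvector_of_isRoot {n : Type*} [Fintype n] [DecidableEq n]
    (N : Matrix n n ℂ) (μ : ℂ) (h : (Matrix.charpoly N).IsRoot μ) :
    ∃ v : n → ℂ, v ≠ 0 ∧ N.mulVec v = μ • v := by
  have hdet : (μ • (1 : Matrix n n ℂ) - N).det = 0 := by
    rw [← charpoly_eval_eq]; exact h
  obtain ⟨v, hv0, hv⟩ := (Matrix.exists_mulVec_eq_zero_iff).2 hdet
  refine ⟨v, hv0, ?_⟩
  rw [Matrix.sub_mulVec, Matrix.smul_mulVec, Matrix.one_mulVec, sub_eq_zero] at hv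
  exact hv.symm


set_option maxHeartbeats 1000000 in
/-- Mixing-time lower bound for the unadjusted p-NCG chain on a discrete log-quadratic
distribution over at least two distinct points: there exist constants `c₁, c₂, Z > 0`
depending only on the distribution with
`t_mix(ε) ≥ ((c₁/Z) exp(c₂/(2α)) − 1) log(1/(2ε))` for all `ε ∈ (0, 1/2)` and `α > 0`;
in particular, the mixing time grows exponentially as `α → 0⁺`. -/
theorem pNCG_mixing_time_lower_bound
    {d : ℕ} [NeZero d] {ι : Type*} [Fintype ι] [DecidableEq ι]
    (hcard : 2 ≤ Fintype.card ι)
    (emb : ι → (Fin d → ℝ)) (hemb : Function.Injective emb)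
    (A : Matrix (Fin d) (Fin d) ℝ) (hA : A.IsHermitian) (b : Fin d → ℝ)
    (p : ℝ) (hp : 1 ≤ p)
    (U : (Fin d → ℝ) → ℝ)
    (hU : ∀ v, U v = -(v ⬝ᵥ A.mulVec v) - b ⬝ᵥ v)
    (hUnonpos : ∀ x : ι, U (emb x) ≤ 0)
    -- gradient of the energy
    (gU : (Fin d → ℝ) → (Fin d → ℝ))
    (hgU : ∀ v, gU v = -((2 : ℝ) • A.mulVec v) - b)
    -- the unadjusted p-NCG transition matrix with step size α
    (M : ℝ → Matrix ι ι ℝ)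
    (hM : ∀ (α : ℝ) (x y : ι), M α x y =
      exp (-(1/2) * (gU (emb x) ⬝ᵥ (emb y - emb x))
          - (1/(2*α)) * pNormPow p (emb y - emb x))
      / ∑ y' : ι, exp (-(1/2) * (gU (emb x) ⬝ᵥ (emb y' - emb x))
          - (1/(2*α)) * pNormPow p (emb y' - emb x)))
    -- the stationary distribution of the chain with step size α
    (pialpha : ℝ → ι → ℝ)
    (hpialpha : ∀ α, (∀ x, 0 ≤ pialpha α x) ∧ (∑ x, pialpha α x = 1) ∧
      ∀ x, pialpha α x = ∑ y, pialpha α y * M α y x) :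
    ∃ c₁ c₂ Z : ℝ, 0 < c₁ ∧ 0 < c₂ ∧ 0 < Z ∧
      ∀ α : ℝ, 0 < α → ∀ ε : ℝ, 0 < ε → ε < 1/2 →
        ∀ t : ℕ, (∀ x : ι, (1/2) * ∑ y, |((M α) ^ t) x y - pialpha α y| ≤ ε) →
          (c₁ / Z * exp (c₂ / (2 * α)) - 1) * Real.log (1 / (2 * ε)) ≤ (t : ℝ) := by
  classical
  have hne_ι : Nonempty ι := Fintype.card_pos_iff.mp (by omega)
  obtain ⟨x₀, y₀, hxy⟩ := Fintype.exists_pair_of_one_lt_card (α := ι) (by omega : 1 < Fintype.card ι)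
  set n := Fintype.card ι with hn
  have hp0 : p ≠ 0 := by intro h; rw [h] at hp; linarith
  -- minimal pairwise p-distance
  set s : Finset (ι × ι) := Finset.univ.filter (fun q : ι × ι => q.1 ≠ q.2) with hs
  have hs_ne : s.Nonempty := ⟨(x₀, y₀), by simp [hs, hxy]⟩
  set c₂ : ℝ := s.inf' hs_ne (fun q => pNormPow p (emb q.2 - emb q.1)) with hc₂
  have hpnorm_pos : ∀ {x y : ι}, x ≠ y → 0 < pNormPow p (emb y - emb x) := by
    intro x y hne
    have hv : emb y - emb x ≠ 0 :=
      sub_ne_zero.mpr (fun h => hne ((hemb h).symm))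
    obtain ⟨i, hi⟩ := Function.ne_iff.mp hv
    have hi' : (emb y - emb x) i ≠ 0 := by simpa using hi
    exact Finset.sum_pos' (fun j _ => Real.rpow_nonneg (abs_nonneg _) p)
      ⟨i, Finset.mem_univ i, Real.rpow_pos_of_pos (abs_pos.mpr hi') p⟩
  have hc₂pos : 0 < c₂ := by
    rw [hc₂, Finset.lt_inf'_iff]
    intro q hq
    have : q.1 ≠ q.2 := by simpa [hs] using hq
    exact hpnorm_pos this
  -- bound on the gradient factor
  have hpair_ne : (Finset.univ : Finset (ι × ι)).Nonempty := ⟨(x₀, y₀), Finset.mem_univ _⟩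
  set B : ℝ := Finset.sup' Finset.univ hpair_ne
      (fun q : ι × ι => exp (-(1/2) * (gU (emb q.1) ⬝ᵥ (emb q.2 - emb q.1)))) with hB
  have hBge : ∀ x y : ι, exp (-(1/2) * (gU (emb x) ⬝ᵥ (emb y - emb x))) ≤ B :=
    fun x y => Finset.le_sup'
      (fun q : ι × ι => exp (-(1/2) * (gU (emb q.1) ⬝ᵥ (emb q.2 - emb q.1))))
      (Finset.mem_univ (x, y))
  have hBpos : 0 < B := lt_of_lt_of_le (exp_pos _) (hBge x₀ y₀)
  have hn2 : (2:ℝ) ≤ (n:ℝ) := by exact_mod_cast hcard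
  set Z : ℝ := 2 * ((n:ℝ) - 1) * B with hZ
  have hZpos : 0 < Z := by
    have : (0:ℝ) < (n:ℝ) - 1 := by linarith
    positivity
  refine ⟨1, c₂, Z, one_pos, hc₂pos, hZpos, ?_⟩
  intro α hα ε hε hε2 t hmix
  have hL : 0 < Real.log (1 / (2 * ε)) := by
    apply Real.log_pos
    rw [lt_div_iff₀ (by linarith)]
    linarith
  set κ : ℝ := 1 / Z * exp (c₂ / (2 * α)) with hκ
  rcases le_or_gt κ 1 with hκ1 | hκ1
  · have h1 : (κ - 1) * Real.log (1 / (2 * ε)) ≤ 0 :=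
      mul_nonpos_of_nonpos_of_nonneg (by linarith) (le_of_lt hL)
    calc (κ - 1) * Real.log (1 / (2 * ε)) ≤ 0 := h1
      _ ≤ (t:ℝ) := Nat.cast_nonneg t
  · -- main case: κ > 1
    obtain ⟨hπ0, hπ1, hπstat⟩ := hpialpha α
    have hκpos : 0 < κ := by
      rw [hκ]; exact mul_pos (div_pos one_pos hZpos) (exp_pos _)
    set E : ι → ι → ℝ := fun x y =>
      -(1/2) * (gU (emb x) ⬝ᵥ (emb y - emb x)) - (1/(2*α)) * pNormPow p (emb y - emb x) with hE
    set den : ι → ℝ := fun x => ∑ y', exp (E x y') with hden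
    have hMα : ∀ x y, M α x y = exp (E x y) / den x := by
      intro x y
      simp only [hden, hE]
      exact hM α x y
    have hdenpos : ∀ x, 0 < den x :=
      fun x => Finset.sum_pos (fun y _ => exp_pos _) Finset.univ_nonempty
    have hExx : ∀ x, E x x = 0 := by
      intro x
      simp [hE, pNormPow, sub_self, Real.zero_rpow hp0]
    have hrow : ∀ x, ∑ y, M α x y = 1 := by
      intro x
      simp only [hMα]
      rw [← Finset.sum_div]
      exact div_self (ne_of_gt (hdenpos x))
    set γ : ℝ := ((n:ℝ) - 1) * B * exp (-(c₂/(2*α))) with hγ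
    have hγ0 : 0 ≤ γ := by
      apply mul_nonneg (mul_nonneg (by linarith) hBpos.le) (exp_nonneg _)
    have hrest : ∀ x, den x - 1 ≤ γ ∧ 1 ≤ den x := by
      intro x
      have hsplit : den x = exp (E x x) + ∑ y ∈ Finset.univ.erase x, exp (E x y) :=
        (Finset.add_sum_erase Finset.univ (fun y => exp (E x y)) (Finset.mem_univ x)).symm
      have hxx : exp (E x x) = 1 := by rw [hExx x, Real.exp_zero]
      have hterm : ∀ y ∈ Finset.univ.erase x, exp (E x y) ≤ B * exp (-(c₂/(2*α))) := by
        intro y hy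
        have hne : y ≠ x := Finset.ne_of_mem_erase hy
        have hD : c₂ ≤ pNormPow p (emb y - emb x) := by
          rw [hc₂]
          exact Finset.inf'_le _ (show ((x, y) : ι × ι) ∈ s by simp [hs, Ne.symm hne])
        have hmono : E x y ≤ -(1/2) * (gU (emb x) ⬝ᵥ (emb y - emb x)) + (-(c₂/(2*α))) := by
          have h1 : (1/(2*α)) * c₂ ≤ (1/(2*α)) * pNormPow p (emb y - emb x) :=
            mul_le_mul_of_nonneg_left hD (by positivity)
          have h2 : c₂/(2*α) = (1/(2*α)) * c₂ := by ring
          simp only [hE]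
          linarith
        calc exp (E x y)
            ≤ exp (-(1/2) * (gU (emb x) ⬝ᵥ (emb y - emb x)) + (-(c₂/(2*α)))) :=
              Real.exp_le_exp.mpr hmono
          _ = exp (-(1/2) * (gU (emb x) ⬝ᵥ (emb y - emb x))) * exp (-(c₂/(2*α))) :=
              Real.exp_add _ _
          _ ≤ B * exp (-(c₂/(2*α))) :=
              mul_le_mul_of_nonneg_right (hBge x y) (exp_nonneg _)
      have hcard_er : ((Finset.univ.erase x).card : ℝ) = (n:ℝ) - 1 := by
        rw [Finset.card_erase_of_mem (Finset.mem_univ x), Finset.card_univ, ← hn]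
        have h1n : 1 ≤ n := by omega
        push_cast [Nat.cast_sub h1n]
        ring
      have hsum : ∑ y ∈ Finset.univ.erase x, exp (E x y) ≤ γ := by
        calc ∑ y ∈ Finset.univ.erase x, exp (E x y)
            ≤ (Finset.univ.erase x).card • (B * exp (-(c₂/(2*α)))) :=
              Finset.sum_le_card_nsmul _ _ _ hterm
          _ = ((Finset.univ.erase x).card : ℝ) * (B * exp (-(c₂/(2*α)))) := by
              rw [nsmul_eq_mul]
          _ = γ := by rw [hcard_er, hγ]; ring
      have hnn : 0 ≤ ∑ y ∈ Finset.univ.erase x, exp (E x y) :=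
        Finset.sum_nonneg fun y _ => (exp_pos _).le
      constructor
      · linarith
      · linarith
    have hdiag : ∀ x, 1 - γ ≤ M α x x := by
      intro x
      obtain ⟨h1, h2⟩ := hrest x
      have hMxx : M α x x = 1 / den x := by rw [hMα, hExx, Real.exp_zero]
      rw [hMxx, le_div_iff₀ (hdenpos x)]
      nlinarith [sq_nonneg (den x - 1)]
    have htr : (n:ℝ) * (1 - γ) ≤ Matrix.trace (M α) := by
      have : Matrix.trace (M α) = ∑ x, M α x x := by
        simp [Matrix.trace, Matrix.diag]
      rw [this]
      calc (n:ℝ) * (1 - γ) = (Finset.univ : Finset ι).card • (1 - γ) := by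
            rw [Finset.card_univ, nsmul_eq_mul, hn]
        _ ≤ ∑ x, M α x x := Finset.card_nsmul_le_sum _ _ _ (fun x _ => hdiag x)
    -- pass to complex matrices
    set N : Matrix ι ι ℂ := Matrix.of
      (fun x y => ((M α x y : ℝ) : ℂ) - ((pialpha α y : ℝ) : ℂ)) with hNdef
    have hNapp : ∀ x y, N x y = (M α x y : ℂ) - (pialpha α y : ℂ) := fun x y => rfl
    have hdet : N.det = 0 := by
      rw [← Matrix.exists_mulVec_eq_zero_iff]
      refine ⟨fun _ => 1, ?_, ?_⟩
      · intro h
        have := congr_fun h x₀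
        simp at this
      · funext x
        simp only [Matrix.mulVec, dotProduct, hNapp, mul_one]
        rw [Finset.sum_sub_distrib, ← Complex.ofReal_sum, ← Complex.ofReal_sum, hrow x, hπ1]
        simp
    have hsplits := IsAlgClosed.splits (k := ℂ) N.charpoly
    set R := N.charpoly.roots with hRdef
    have hcardR : Multiset.card R = n := by
      rw [hRdef, (Polynomial.splits_iff_card_roots).mp hsplits,
        Matrix.charpoly_natDegree_eq_dim]
    have hsumR : R.sum = N.trace := (Matrix.trace_eq_sum_roots_charpoly N).symm
    have h0R : (0:ℂ) ∈ R := by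
      have hprod : R.prod = 0 := by
        rw [hRdef, ← Matrix.det_eq_prod_roots_charpoly N]; exact hdet
      exact Multiset.prod_eq_zero_iff.mp hprod
    set R' := R.erase 0 with hR'
    have hconsR : (0:ℂ) ::ₘ R' = R := Multiset.cons_erase h0R
    have hcardR' : Multiset.card R' = n - 1 := by
      rw [hR', Multiset.card_erase_of_mem h0R, hcardR]
      rfl
    have hsumR' : R'.sum = N.trace := by
      rw [← hsumR, ← hconsR, Multiset.sum_cons, zero_add]
    have htrN : N.trace = ((Matrix.trace (M α) - 1 : ℝ) : ℂ) := by
      have h1 : N.trace = ∑ x, N x x := by simp [Matrix.trace, Matrix.diag]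
      have h2 : Matrix.trace (M α) = ∑ x, M α x x := by simp [Matrix.trace, Matrix.diag]
      rw [h1, h2]
      simp only [hNapp]
      rw [Finset.sum_sub_distrib, ← Complex.ofReal_sum, ← Complex.ofReal_sum, hπ1]
      push_cast
      ring
    -- extract a large eigenvalue
    have hR'map_ne : R'.map Complex.re ≠ 0 := by
      intro h
      have hc : Multiset.card (R'.map Complex.re) = 0 := by rw [h]; rfl
      rw [Multiset.card_map, hcardR'] at hc
      omega
    obtain ⟨r, hrmem, hrsum⟩ := multiset_exists_card_mul_le _ hR'map_ne
    obtain ⟨lam, hlam_mem, hlam_re⟩ := Multiset.mem_map.mp hrmem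
    have hmapsum : (R'.map Complex.re).sum = (R'.sum).re := by
      simpa using (map_multiset_sum Complex.reAddGroupHom R').symm
    have hcardmap : (Multiset.card (R'.map Complex.re) : ℝ) = (n:ℝ) - 1 := by
      rw [Multiset.card_map, hcardR']
      have h1n : 1 ≤ n := by omega
      push_cast [Nat.cast_sub h1n]
      ring
    have htr_le : Matrix.trace (M α) - 1 ≤ ((n:ℝ) - 1) * r := by
      have := hrsum
      rw [hmapsum, hsumR', htrN, Complex.ofReal_re, hcardmap] at this
      exact this
    have hκinv : 1/κ = Z * exp (-(c₂/(2*α))) := by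
      rw [hκ, Real.exp_neg]
      field_simp
    have h2γ : 2 * γ = 1/κ := by
      rw [hκinv, hγ, hZ]; ring
    have hr_ge : 1 - 1/κ ≤ r := by
      have hngt : (0:ℝ) < (n:ℝ) - 1 := by linarith
      nlinarith [htr, htr_le, hγ0, hn2]
    have h1κlt : 1/κ < 1 := by
      rw [div_lt_one hκpos]; linarith
    have hlam_re_pos : 0 < lam.re := by rw [hlam_re]; linarith
    have hlam0 : lam ≠ 0 := by
      intro h
      rw [h, Complex.zero_re] at hlam_re_pos
      linarith
    -- eigenvector
    have hroot : N.charpoly.IsRoot lam := by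
      have hmemR : lam ∈ R := Multiset.mem_of_mem_erase (hR' ▸ hlam_mem)
      exact (Polynomial.mem_roots'.mp (hRdef ▸ hmemR)).2
    obtain ⟨v, hv0, hNv⟩ := exists_eigenvector_of_isRoot N lam hroot
    have hπN : ∀ y, ∑ x, (pialpha α x : ℂ) * N x y = 0 := by
      intro y
      have h1 : ∑ x, (pialpha α x : ℂ) * (M α x y : ℂ) = ((pialpha α y : ℝ) : ℂ) := by
        calc ∑ x, (pialpha α x : ℂ) * (M α x y : ℂ)
            = ((∑ x, pialpha α x * M α x y : ℝ) : ℂ) := by push_cast; rfl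
          _ = _ := by rw [← hπstat y]
      have h2 : ∑ x, ((pialpha α x : ℝ) : ℂ) = 1 := by
        calc ∑ x, ((pialpha α x : ℝ) : ℂ) = ((∑ x, pialpha α x : ℝ) : ℂ) := by push_cast; rfl
          _ = 1 := by rw [hπ1]; norm_num
      simp only [hNapp]
      calc ∑ x, (pialpha α x : ℂ) * ((M α x y : ℂ) - (pialpha α y : ℂ))
          = (∑ x, (pialpha α x : ℂ) * (M α x y : ℂ))
            - (∑ x, ((pialpha α x : ℝ) : ℂ)) * (pialpha α y : ℂ) := by
            simp [mul_sub, Finset.sum_sub_distrib, ← Finset.sum_mul]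
        _ = 0 := by rw [h1, h2]; ring
    have hπv : ∑ y, (pialpha α y : ℂ) * v y = 0 := by
      have hswap : ∑ x, (pialpha α x : ℂ) * (N.mulVec v) x
          = ∑ y, (∑ x, (pialpha α x : ℂ) * N x y) * v y := by
        simp only [Matrix.mulVec, dotProduct, Finset.mul_sum, Finset.sum_mul]
        rw [Finset.sum_comm]
        refine Finset.sum_congr rfl fun y _ => Finset.sum_congr rfl fun x _ => by ring
      have hz : ∑ x, (pialpha α x : ℂ) * (N.mulVec v) x
          = lam * ∑ y, (pialpha α y : ℂ) * v y := by
        rw [hNv]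
        simp only [Pi.smul_apply, smul_eq_mul, Finset.mul_sum]
        exact Finset.sum_congr rfl fun x _ => by ring
      rw [hswap] at hz
      simp only [hπN, zero_mul, Finset.sum_const_zero] at hz
      rcases mul_eq_zero.mp hz.symm with h | h
      · exact absurd h hlam0
      · exact h
    set Mc : Matrix ι ι ℂ := (Complex.ofRealHom.mapMatrix (M α) : Matrix ι ι ℂ) with hMc
    have hMcapp : ∀ x y, Mc x y = (M α x y : ℂ) := fun x y => rfl
    have hMcv : Mc.mulVec v = lam • v := by
      funext x
      have hNvx := congr_fun hNv x
      have hsplit : (Mc.mulVec v) x = (N.mulVec v) x + ∑ y, (pialpha α y : ℂ) * v y := by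
        simp only [Matrix.mulVec, dotProduct, hNapp, hMcapp]
        rw [← Finset.sum_add_distrib]
        exact Finset.sum_congr rfl fun y _ => by ring
      rw [hsplit, hπv, add_zero, hNvx]
    have hMcpow : ∀ k : ℕ, (Mc ^ k).mulVec v = (lam ^ k) • v := by
      intro k
      induction k with
      | zero => simp [Matrix.one_mulVec]
      | succ k ih =>
        rw [pow_succ, ← Matrix.mulVec_mulVec, hMcv, Matrix.mulVec_smul, ih, smul_smul,
          ← pow_succ']
    have hMcpow_entry : ∀ x y, (Mc ^ t) x y = (((M α) ^ t) x y : ℂ) := by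
      intro x y
      have hmp : Mc ^ t = Complex.ofRealHom.mapMatrix ((M α) ^ t) := by
        rw [hMc, ← _root_.map_pow]
      rw [hmp]
      rfl
    obtain ⟨x, -, hxmax⟩ := Finset.exists_max_image (Finset.univ : Finset ι)
      (fun y => ‖v y‖) ⟨x₀, Finset.mem_univ _⟩
    have hvx : 0 < ‖v x‖ := by
      rcases Function.ne_iff.mp hv0 with ⟨y, hy⟩
      have hy' : 0 < ‖v y‖ := by
        have : v y ≠ 0 := by simpa using hy
        exact norm_pos_iff.mpr this
      exact lt_of_lt_of_le hy' (hxmax y (Finset.mem_univ y))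
    have he : lam ^ t * v x = ∑ y, ((((M α) ^ t) x y : ℂ) - (pialpha α y : ℂ)) * v y := by
      calc lam ^ t * v x = ((Mc ^ t).mulVec v) x := by
            rw [hMcpow t]; simp
        _ = ∑ y, (((M α) ^ t) x y : ℂ) * v y := by
            simp only [Matrix.mulVec, dotProduct, hMcpow_entry]
        _ = ∑ y, ((((M α) ^ t) x y : ℂ) - (pialpha α y : ℂ)) * v y := by
            simp only [sub_mul, Finset.sum_sub_distrib, hπv, sub_zero]
    have habs : (‖lam‖) ^ t * ‖v x‖
        ≤ (∑ y, |((M α) ^ t) x y - pialpha α y|) * ‖v x‖ := by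
      have h1 : ‖lam ^ t * v x‖ = (‖lam‖) ^ t * ‖v x‖ := by
        rw [norm_mul, norm_pow]
      rw [← h1, he]
      calc ‖∑ y, ((((M α) ^ t) x y : ℂ) - (pialpha α y : ℂ)) * v y‖
          ≤ ∑ y, ‖((((M α) ^ t) x y : ℂ) - (pialpha α y : ℂ)) * v y‖ :=
            norm_sum_le _ _
        _ ≤ ∑ y, |((M α) ^ t) x y - pialpha α y| * ‖v x‖ := by
            refine Finset.sum_le_sum fun y _ => ?_
            rw [norm_mul, ← Complex.ofReal_sub, Complex.norm_real, Real.norm_eq_abs]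
            exact mul_le_mul_of_nonneg_left (hxmax y (Finset.mem_univ y)) (abs_nonneg _)
        _ = (∑ y, |((M α) ^ t) x y - pialpha α y|) * ‖v x‖ := by
            rw [Finset.sum_mul]
    have hsum2ε : ∑ y, |((M α) ^ t) x y - pialpha α y| ≤ 2 * ε := by
      have := hmix x
      linarith
    set r0 : ℝ := ‖lam‖ with hr0
    have hr0t : r0 ^ t ≤ 2 * ε := by
      have hstep : r0 ^ t * ‖v x‖ ≤ (2 * ε) * ‖v x‖ :=
        le_trans habs (mul_le_mul_of_nonneg_right hsum2ε (norm_nonneg _))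
      exact le_of_mul_le_mul_right hstep hvx
    have hr0_ge : 1 - 1/κ ≤ r0 := by
      have := Complex.re_le_norm lam
      rw [hlam_re] at this
      rw [hr0]
      linarith
    have hr0pos : 0 < r0 := by linarith
    have h2ε1 : 2 * ε < 1 := by linarith
    have hr0lt1 : r0 < 1 := by
      by_contra hcon
      push_neg at hcon
      have : (1:ℝ) ≤ r0 ^ t := one_le_pow₀ hcon
      linarith
    have hlog_t : Real.log (1/(2*ε)) ≤ (t:ℝ) * (-(Real.log r0)) := by
      have h1 : Real.log (r0 ^ t) ≤ Real.log (2*ε) :=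
        Real.log_le_log (pow_pos hr0pos t) hr0t
      rw [Real.log_pow] at h1
      rw [one_div, Real.log_inv]
      push_cast at h1 ⊢
      linarith
    have hsκ : 0 < κ - 1 := by linarith
    have hexp1 : κ / (κ - 1) ≤ exp (1/(κ-1)) := by
      have h1 := Real.add_one_le_exp (1/(κ-1))
      have h2 : 1/(κ-1) + 1 = κ/(κ-1) := by field_simp; ring
      linarith
    have hexp2 : exp (-(1/(κ-1))) ≤ 1 - 1/κ := by
      rw [Real.exp_neg]
      have hq : 0 < κ/(κ-1) := div_pos hκpos hsκ
      have h1 : (exp (1/(κ-1)))⁻¹ ≤ (κ/(κ-1))⁻¹ := by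
        apply inv_anti₀ hq hexp1
      have h2 : (κ/(κ-1))⁻¹ = 1 - 1/κ := by
        rw [inv_div]
        field_simp
      linarith
    have hlog_ge : -(1/(κ-1)) ≤ Real.log r0 :=
      (Real.le_log_iff_exp_le hr0pos).mpr (le_trans hexp2 hr0_ge)
    have hlogκ : (κ - 1) * (-(Real.log r0)) ≤ 1 := by
      have h1 : -(Real.log r0) ≤ 1/(κ-1) := by linarith
      calc (κ-1) * (-(Real.log r0)) ≤ (κ-1) * (1/(κ-1)) :=
            mul_le_mul_of_nonneg_left h1 hsκ.le
        _ = 1 := by field_simp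
    have h1 : (κ-1) * Real.log (1/(2*ε)) ≤ (κ-1) * ((t:ℝ) * (-(Real.log r0))) :=
      mul_le_mul_of_nonneg_left hlog_t hsκ.le
    have h2 : (κ-1) * ((t:ℝ) * (-(Real.log r0))) = (t:ℝ) * ((κ-1) * (-(Real.log r0))) := by
      ring
    have h3 : (t:ℝ) * ((κ-1) * (-(Real.log r0))) ≤ (t:ℝ) * 1 :=
      mul_le_mul_of_nonneg_left hlogκ (Nat.cast_nonneg t)
    linarith


end
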